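/- Let M = (G, F) be a Bayesian network, x a treatment instantiation of variables 𝐗, and M_x the mutilated network (remove edges into 𝐗 and set each X ∈ 𝐗 to the point-mass CPT on its value in x). Let T ∉ 𝐗 be a functional variable. Then mutilation and functional elimination of T commute: functionally eliminating T from M_x yields the mutilated network (with respect to x) of the network obtained by functionally eliminating T from M. -/
import Mathlib


attribute [local instance] Classical.propDecidable

section
variable {ι : Type*} [Fintype ι] [DecidableEq ι]
  {S : ι → Type*} [∀ i, Fintype (S i)] [∀ i, DecidableEq (S i)]

/-- Functional elimination of a vertex `T` from the DAG: connect every parent of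
`T` to every child of `T` and delete `T`. -/
def elimE (E : ι → ι → Prop) (T : ι) : ι → ι → Prop :=
  fun a b => a ≠ T ∧ b ≠ T ∧ (E a b ∨ (E a T ∧ E T b))

/-- Functional elimination of `T` on CPTs: the CPT of each child `C` of `T`
(w.r.t. the edge relation `E`) is replaced by `∑ t, f_T · f_C`; other CPTs are
unchanged. -/
noncomputable def elimF (E : ι → ι → Prop) (F : (i : ι) → (∀ j, S j) → ℝ) (T : ι) :
    (i : ι) → (∀ j, S j) → ℝ :=
  fun i v =>
    if E T i then
      ∑ t : S T, F T (Function.update v T t) * F i (Function.update v T t)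
    else F i v

/-- Mutilated edge relation w.r.t. the intervention `do(Xvars)`: delete all edges into
variables of `Xvars`. -/
def mutE (E : ι → ι → Prop) (Xvars : Set ι) : ι → ι → Prop :=
  fun a b => E a b ∧ b ∉ Xvars

/-- Mutilated CPTs w.r.t. `do(Xvars = xs)`: each `X ∈ Xvars` gets the point-mass CPT on
its value in `xs`; other CPTs are unchanged. -/
noncomputable def mutF (F : (i : ι) → (∀ j, S j) → ℝ) (Xvars : Set ι) (xs : ∀ i, S i) :
    (i : ι) → (∀ j, S j) → ℝ :=
  fun i v => if i ∈ Xvars then (if v i = xs i then 1 else 0) else F i v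

/-- For a functional variable `T ∉ Xvars`, mutilation w.r.t. `do(Xvars = xs)`
and functional elimination of `T` commute, both on the DAG and on the CPTs:
functionally eliminating `T` from the mutilated network yields the mutilated
version of the network obtained by functionally eliminating `T`. -/
theorem mutilation_elimination_comm
    (E : ι → ι → Prop) (hacyc : ∀ i, ¬ Relation.TransGen E i i)
    (F : (i : ι) → (∀ j, S j) → ℝ)
    (hloc : ∀ i v w, (∀ j, E j i → v j = w j) → v i = w i → F i v = F i w)
    (hnn : ∀ i v, 0 ≤ F i v)
    (hsum : ∀ i v, ∑ x : S i, F i (Function.update v i x) = 1)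
    (Xvars : Set ι) (xs : ∀ i, S i) (T : ι) (hT : T ∉ Xvars)
    (hfunc : ∀ v, F T v = 0 ∨ F T v = 1) :
    (∀ a b, elimE (mutE E Xvars) T a b ↔ mutE (elimE E T) Xvars a b) ∧
    (∀ i v, elimF (mutE E Xvars) (mutF F Xvars xs) T i v = mutF (elimF E F T) Xvars xs i v) := by
  constructor
  · intro a b
    simp only [elimE, mutE]
    constructor
    · rintro ⟨ha, hb, h | ⟨⟨h1, _⟩, h2, hbX⟩⟩
      exacts [⟨⟨ha, hb, Or.inl h.1⟩, h.2⟩, ⟨⟨ha, hb, Or.inr ⟨h1, h2⟩⟩, hbX⟩]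
    · rintro ⟨⟨ha, hb, h | ⟨h1, h2⟩⟩, hbX⟩
      exacts [⟨ha, hb, Or.inl ⟨h, hbX⟩⟩, ⟨ha, hb, Or.inr ⟨⟨h1, hT⟩, h2, hbX⟩⟩]
  · intro i v
    simp only [elimF, mutE, mutF]
    by_cases hiX : i ∈ Xvars
    · have : ¬ (E T i ∧ i ∉ Xvars) := fun h => h.2 hiX
      simp [this, hiX]
    · by_cases hETi : E T i
      · have h1 : E T i ∧ i ∉ Xvars := ⟨hETi, hiX⟩
        simp only [if_pos h1, if_pos hETi, if_neg hiX, if_neg hT]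
      · have h1 : ¬ (E T i ∧ i ∉ Xvars) := fun h => hETi h.1
        simp [h1, hETi, hiX]

end
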